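/- Let J₁, J₂ ⊆ {1,…,m} with |J₁| = |J₂| = d, |J₁ ∩ J₂| = d − 1, say J₁ = (J₁∩J₂) ∪ {j₁} and J₂ = (J₁∩J₂) ∪ {j₂} with j₁ ≠ j₂. Define v = e_{j₁} + e_{j₂} + 2·Σ_{i ∈ (J₁∪J₂)^c} e_i ∈ ℝ^m. Then for every I ⊆ {1,…,m} with |I| = d, one has v·z_I = 2(m−d−1)+1 if I = J₁ or I = J₂, and v·z_I < 2(m−d−1)+1 otherwise. -/

import Mathlib

/-- `z_I ∈ {0,1}^m`: zero on the coordinates in `I`, one elsewhere. -/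
def zvec {m : ℕ} (I : Finset (Fin m)) : Fin m → ℝ := fun i => if i ∈ I then 0 else 1

/-- with `J₁ = (J₁∩J₂) ∪ {j₁}`, `J₂ = (J₁∩J₂) ∪ {j₂}`, `j₁ ≠ j₂`,
`|J₁| = |J₂| = d`, `|J₁∩J₂| = d−1`, and `v = e_{j₁} + e_{j₂} + 2·Σ_{i∈(J₁∪J₂)ᶜ} e_i`,
for every `I` with `|I| = d` one has `v·z_I = 2(m−d−1)+1` if `I ∈ {J₁, J₂}` and
`v·z_I < 2(m−d−1)+1` otherwise. -/
theorem stmt4 {m d : ℕ} (J₁ J₂ : Finset (Fin m))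
    (h1 : J₁.card = d) (h2 : J₂.card = d)
    (j₁ j₂ : Fin m) (hne : j₁ ≠ j₂)
    (hJ1 : J₁ = (J₁ ∩ J₂) ∪ {j₁}) (hJ2 : J₂ = (J₁ ∩ J₂) ∪ {j₂})
    (hcap : (J₁ ∩ J₂).card + 1 = d)
    (v : Fin m → ℝ)
    (hv : v = fun i => (if i = j₁ then 1 else 0) + (if i = j₂ then 1 else 0)
        + (if i ∈ (J₁ ∪ J₂)ᶜ then 2 else 0)) :
    ∀ I : Finset (Fin m), I.card = d →
      ((I = J₁ ∨ I = J₂) → ∑ i, v i * zvec I i = 2 * ((m : ℝ) - d - 1) + 1) ∧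
      (I ≠ J₁ → I ≠ J₂ → ∑ i, v i * zvec I i < 2 * ((m : ℝ) - d - 1) + 1) := by
  -- basic membership facts
  have hj1ni : j₁ ∉ J₁ ∩ J₂ := by
    intro h
    have he : (J₁ ∩ J₂) ∪ {j₁} = J₁ ∩ J₂ :=
      Finset.union_eq_left.2 (Finset.singleton_subset_iff.2 h)
    rw [hJ1, he] at h1
    omega
  have hj2ni : j₂ ∉ J₁ ∩ J₂ := by
    intro h
    have he : (J₁ ∩ J₂) ∪ {j₂} = J₁ ∩ J₂ :=
      Finset.union_eq_left.2 (Finset.singleton_subset_iff.2 h)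
    rw [hJ2, he] at h2
    omega
  have hj1J1 : j₁ ∈ J₁ := by rw [hJ1]; simp
  have hj2J2 : j₂ ∈ J₂ := by rw [hJ2]; simp
  have hj1nJ2 : j₁ ∉ J₂ := fun h => hj1ni (Finset.mem_inter.2 ⟨hj1J1, h⟩)
  have hj2nJ1 : j₂ ∉ J₁ := fun h => hj2ni (Finset.mem_inter.2 ⟨h, hj2J2⟩)
  have hcu : (J₁ ∪ J₂).card = d + 1 := by
    have := Finset.card_union_add_card_inter J₁ J₂
    omega
  have hm : d + 1 ≤ m := by
    have := Finset.card_le_univ (J₁ ∪ J₂)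
    simpa [hcu] using this
  -- the dot product as a complement sum
  have hIsum : ∀ I : Finset (Fin m),
      ∑ i, v i * zvec I i = (∑ i, v i) - ∑ i ∈ I, v i := by
    intro I
    have : ∑ i, v i * zvec I i = ∑ i ∈ Iᶜ, v i := by
      rw [← Finset.sum_compl_add_sum I]
      have h0 : ∑ i ∈ I, v i * zvec I i = 0 :=
        Finset.sum_eq_zero fun i hi => by simp [zvec, hi]
      have h1' : ∑ i ∈ Iᶜ, v i * zvec I i = ∑ i ∈ Iᶜ, v i :=
        Finset.sum_congr rfl fun i hi => by
          simp [zvec, Finset.mem_compl.1 hi]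
      rw [h0, h1', add_zero]
    rw [this]
    have := Finset.sum_compl_add_sum I v
    linarith
  -- total sum of v
  have hT : ∑ i, v i = 2 * ((m : ℝ) - d - 1) + 2 := by
    subst hv
    rw [Finset.sum_add_distrib, Finset.sum_add_distrib]
    rw [Finset.sum_ite_eq' Finset.univ j₁ (fun _ => (1:ℝ)),
        Finset.sum_ite_eq' Finset.univ j₂ (fun _ => (1:ℝ))]
    have h3 : ∑ i, (if i ∈ (J₁ ∪ J₂)ᶜ then (2:ℝ) else 0)
        = 2 * ((J₁ ∪ J₂)ᶜ.card : ℝ) := by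
      rw [Finset.sum_ite_mem, Finset.univ_inter, Finset.sum_const]
      simp [mul_comm]
    rw [h3]
    have hcc : ((J₁ ∪ J₂)ᶜ.card : ℝ) = (m : ℝ) - d - 1 := by
      rw [Finset.card_compl, hcu]
      rw [Fintype.card_fin, Nat.cast_sub hm]
      push_cast
      ring
    rw [hcc]
    simp
    ring
  -- sum over a set I
  have hS : ∀ I : Finset (Fin m),
      ∑ i ∈ I, v i = (if j₁ ∈ I then (1:ℝ) else 0) + (if j₂ ∈ I then (1:ℝ) else 0)
        + 2 * ((I ∩ (J₁ ∪ J₂)ᶜ).card : ℝ) := by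
    intro I
    subst hv
    rw [Finset.sum_add_distrib, Finset.sum_add_distrib]
    rw [Finset.sum_ite_eq' I j₁ (fun _ => (1:ℝ)),
        Finset.sum_ite_eq' I j₂ (fun _ => (1:ℝ))]
    congr 1
    rw [Finset.sum_ite_mem, Finset.sum_const]
    simp [mul_comm]
  intro I hI
  constructor
  · rintro (h | h) <;> rw [h]
    · have hdisj : J₁ ∩ (J₁ ∪ J₂)ᶜ = ∅ := by
        ext x
        simp only [Finset.mem_inter, Finset.mem_compl, Finset.mem_union,
          Finset.notMem_empty, iff_false]
        rintro ⟨hx, hx2⟩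
        exact hx2 (Or.inl hx)
      rw [hIsum, hT, hS, hdisj]
      simp [hj1J1, hj2nJ1]
      ring
    · have hdisj : J₂ ∩ (J₁ ∪ J₂)ᶜ = ∅ := by
        ext x
        simp only [Finset.mem_inter, Finset.mem_compl, Finset.mem_union,
          Finset.notMem_empty, iff_false]
        rintro ⟨hx, hx2⟩
        exact hx2 (Or.inr hx)
      rw [hIsum, hT, hS, hdisj]
      simp [hj2J2, hj1nJ2]
      ring
  · intro hne1 hne2
    rw [hIsum, hT, hS]
    have hkey : (if j₁ ∈ I then (1:ℝ) else 0) + (if j₂ ∈ I then (1:ℝ) else 0)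
        + 2 * ((I ∩ (J₁ ∪ J₂)ᶜ).card : ℝ) ≥ 2 := by
      by_cases hsub : I ⊆ J₁ ∪ J₂
      · have hj1I : j₁ ∈ I := by
          by_contra hj1I
          apply hne2
          apply Finset.eq_of_subset_of_card_le _ (by omega)
          intro i hi
          rcases Finset.mem_union.1 (hsub hi) with hiJ1 | hiJ2
          · rw [hJ1] at hiJ1
            rcases Finset.mem_union.1 hiJ1 with hii | hii
            · exact Finset.mem_of_mem_inter_right hii
            · exact absurd (Finset.mem_singleton.1 hii ▸ hi) hj1I
          · exact hiJ2
        have hj2I : j₂ ∈ I := by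
          by_contra hj2I
          apply hne1
          apply Finset.eq_of_subset_of_card_le _ (by omega)
          intro i hi
          rcases Finset.mem_union.1 (hsub hi) with hiJ1 | hiJ2
          · exact hiJ1
          · rw [hJ2] at hiJ2
            rcases Finset.mem_union.1 hiJ2 with hii | hii
            · exact Finset.mem_of_mem_inter_left hii
            · exact absurd (Finset.mem_singleton.1 hii ▸ hi) hj2I
        have : (0:ℝ) ≤ ((I ∩ (J₁ ∪ J₂)ᶜ).card : ℝ) := Nat.cast_nonneg _
        rw [if_pos hj1I, if_pos hj2I]
        linarith
      · obtain ⟨x, hxI, hxn⟩ := Finset.not_subset.1 hsub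
        have hx : x ∈ I ∩ (J₁ ∪ J₂)ᶜ :=
          Finset.mem_inter.2 ⟨hxI, Finset.mem_compl.2 hxn⟩
        have hcard : 1 ≤ (I ∩ (J₁ ∪ J₂)ᶜ).card := Finset.card_pos.2 ⟨x, hx⟩
        have hcard' : (1:ℝ) ≤ ((I ∩ (J₁ ∪ J₂)ᶜ).card : ℝ) := by exact_mod_cast hcard
        have h01 : (0:ℝ) ≤ (if j₁ ∈ I then (1:ℝ) else 0) := by positivity
        have h02 : (0:ℝ) ≤ (if j₂ ∈ I then (1:ℝ) else 0) := by positivity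
        linarith
    linarith
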